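/- Let H be a bipartite matching covered graph with bipartition (U, W), and let u ∈ U have degree d ≥ 3. If uw1, ..., uwr (0 < r ≤ d) are nonremovable edges of H incident with u, then there exist partitions (U0, U1, ..., Ur) of U and (W0, W1, ..., Wr) of W such that u ∈ U0 and, for each i in {1, ..., r}: |Ui| = |Wi|, wi ∈ Wi, N(Wi) = Ui ∪ {u}, and uwi is the only edge between U0 and Wi. -/

import Mathlib

open SimpleGraph Set

universe u
variable {V : Type u}

/-- Number of odd components of a graph. -/
noncomputable def oddComps (G : SimpleGraph V) : ℕ :=
  Nat.card {c : G.ConnectedComponent // Odd (Nat.card c.supp)}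

/-- `S` is a barrier of `G`: the number of odd components of `G − S` equals `|S|`. -/
def IsBarrier (G : SimpleGraph V) (S : Set V) : Prop :=
  oddComps (G.induce Sᶜ) = S.ncard

/-- `G` has a perfect matching. -/
def HasPM (G : SimpleGraph V) : Prop :=
  ∃ M : Subgraph G, M.IsPerfectMatching

/-- `G` is matching covered. -/
def MatchingCovered (G : SimpleGraph V) : Prop :=
  G.Connected ∧ G.edgeSet.Nonempty ∧
    ∀ e ∈ G.edgeSet, ∃ M : Subgraph G, M.IsPerfectMatching ∧ e ∈ M.edgeSet

/-- An edge `e` of a matching covered graph `G` is removable. -/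
def Removable (G : SimpleGraph V) (e : Sym2 V) : Prop :=
  e ∈ G.edgeSet ∧ MatchingCovered (G.deleteEdges {e})

/-- `G` is 3-connected. -/
def ThreeConnected (G : SimpleGraph V) : Prop :=
  4 ≤ Nat.card V ∧ ∀ S : Set V, S.ncard ≤ 2 → (G.induce Sᶜ).Connected

/-- A brick. -/
def IsBrick (G : SimpleGraph V) : Prop :=
  ThreeConnected G ∧ ∀ x y : V, x ≠ y → HasPM (G.induce ({x, y} : Set V)ᶜ)

/-- neighbours outside `S` of vertices of `S`. -/
def Nbrs (G : SimpleGraph V) (S : Set V) : Set V :=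
  {v | v ∉ S ∧ ∃ u ∈ S, G.Adj u v}

/-- factor-critical graph. -/
def FactorCritical (G : SimpleGraph V) : Prop :=
  ∀ v : V, HasPM (G.induce ({v} : Set V)ᶜ)

/-- `(U, W)` is a bipartition of `G`. -/
def IsBipartition (G : SimpleGraph V) (U W : Set V) : Prop :=
  Disjoint U W ∧ U ∪ W = Set.univ ∧
    ∀ a b : V, G.Adj a b → (a ∈ U ∧ b ∈ W) ∨ (a ∈ W ∧ b ∈ U)

def s12nhd (H : SimpleGraph V) (S : Set V) : Set V := {v : V | ∃ x ∈ S, H.Adj v x}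

lemma s12nhd_mono {H : SimpleGraph V} {S T : Set V} (h : S ⊆ T) :
    s12nhd H S ⊆ s12nhd H T := fun v ⟨x, hx, hadj⟩ => ⟨x, h hx, hadj⟩

lemma s12nhd_union {H : SimpleGraph V} (S T : Set V) :
    s12nhd H (S ∪ T) = s12nhd H S ∪ s12nhd H T := by
  ext v
  constructor
  · rintro ⟨x, (hx | hx), hadj⟩
    · exact Or.inl ⟨x, hx, hadj⟩
    · exact Or.inr ⟨x, hx, hadj⟩
  · rintro (⟨x, hx, hadj⟩ | ⟨x, hx, hadj⟩)
    · exact ⟨x, Or.inl hx, hadj⟩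
    · exact ⟨x, Or.inr hx, hadj⟩

section bip
variable {H : SimpleGraph V} {U W : Set V}

lemma s12_notW (hbip : IsBipartition H U W) {v : V} (hv : v ∈ U) : v ∉ W :=
  fun hw => Set.disjoint_left.mp hbip.1 hv hw

lemma s12_adj_right (hbip : IsBipartition H U W) {p q : V} (hadj : H.Adj p q)
    (hp : p ∈ U) : q ∈ W := by
  rcases hbip.2.2 p q hadj with ⟨_, h⟩ | ⟨h, _⟩
  · exact h
  · exact absurd h (s12_notW hbip hp)

lemma s12_adj_left (hbip : IsBipartition H U W) {p q : V} (hadj : H.Adj p q)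
    (hq : q ∈ W) : p ∈ U := by
  rcases hbip.2.2 p q hadj with ⟨h, _⟩ | ⟨_, h⟩
  · exact h
  · exact absurd hq (s12_notW hbip h)

lemma s12nhd_subset_U (hbip : IsBipartition H U W) {S : Set V} (hS : S ⊆ W) :
    s12nhd H S ⊆ U := by
  rintro v ⟨x, hx, hadj⟩
  exact s12_adj_left hbip hadj (hS hx)

/-- partner function of a perfect matching -/
lemma s12_partner {M : Subgraph H} (hM : M.IsPerfectMatching) :
    ∃ m : V → V, Function.Involutive m ∧ (∀ v, M.Adj v (m v)) ∧
      (∀ v y, M.Adj v y → y = m v) := by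
  have h : ∀ v : V, ∃! w, M.Adj v w := fun v => hM.1 (hM.2 v)
  choose m hm hun using h
  refine ⟨m, fun v => (hun (m v) v (M.adj_symm (hm v))).symm, hm, fun v y h => hun v y h⟩

lemma s12_pm_of_mc (hmc : MatchingCovered H) : ∃ M : Subgraph H, M.IsPerfectMatching := by
  obtain ⟨e, he⟩ := hmc.2.1
  obtain ⟨M, hM, -⟩ := hmc.2.2 e he
  exact ⟨M, hM⟩

/-- a global partner function for `H` -/
lemma s12_global_partner (hmc : MatchingCovered H) :
    ∃ m : V → V, Function.Involutive m ∧ (∀ v, H.Adj v (m v)) := by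
  obtain ⟨M, hM⟩ := s12_pm_of_mc hmc
  obtain ⟨m, h1, h2, -⟩ := s12_partner hM
  exact ⟨m, h1, fun v => M.adj_sub (h2 v)⟩

lemma s12_hall_lower [Fintype V] (hmc : MatchingCovered H) (S : Set V) :
    S.ncard ≤ (s12nhd H S).ncard := by
  obtain ⟨m, hinv, hadj⟩ := s12_global_partner hmc
  have himg : m '' S ⊆ s12nhd H S := by
    rintro _ ⟨x, hx, rfl⟩
    exact ⟨x, hx, (hadj x).symm⟩
  calc S.ncard = (m '' S).ncard :=
        (Set.ncard_image_of_injOn (hinv.injective.injOn)).symm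
    _ ≤ (s12nhd H S).ncard := Set.ncard_le_ncard himg (Set.toFinite _)

lemma s12_card_U_eq_W [Fintype V] (hbip : IsBipartition H U W)
    (hmc : MatchingCovered H) : U.ncard = W.ncard := by
  obtain ⟨m, hinv, hadj⟩ := s12_global_partner hmc
  have h1 : m '' U ⊆ W := by
    rintro _ ⟨x, hx, rfl⟩
    exact s12_adj_right hbip (hadj x) hx
  have h2 : m '' W ⊆ U := by
    rintro _ ⟨x, hx, rfl⟩
    exact s12_adj_left hbip ((hadj x).symm) hx
  have e1 : U.ncard = (m '' U).ncard := (Set.ncard_image_of_injOn (hinv.injective.injOn)).symm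
  have e2 : W.ncard = (m '' W).ncard := (Set.ncard_image_of_injOn (hinv.injective.injOn)).symm
  have := Set.ncard_le_ncard h1 (Set.toFinite _)
  have := Set.ncard_le_ncard h2 (Set.toFinite _)
  omega

lemma s12_walk_closed {C : Set V} (hC : ∀ x y, x ∈ C → H.Adj x y → y ∈ C)
    {x y : V} (p : H.Walk x y) (hx : x ∈ C) : y ∈ C := by
  induction p with
  | nil => exact hx
  | cons h _ ih => exact ih (hC _ _ hx h)

/-- in a matching covered bipartite graph, a tight subset of `W` must be all of `W`. -/
lemma s12_tight_eq_W [Fintype V] (hbip : IsBipartition H U W) (hmc : MatchingCovered H)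
    {S : Set V} (hS : S ⊆ W) (hne : S.Nonempty)
    (hcard : (s12nhd H S).ncard ≤ S.ncard) : S = W := by
  -- no edge between N(S) and W \ S
  have hpos : 0 < S.ncard := (Set.ncard_pos (Set.toFinite _)).mpr hne
  have step1 : ∀ p q, p ∈ s12nhd H S → q ∈ W → q ∉ S → ¬ H.Adj p q := by
    intro p q hp hqW hqS hadjpq
    obtain ⟨M, hM, he⟩ := hmc.2.2 s(p, q) (H.mem_edgeSet.mpr hadjpq)
    obtain ⟨m, hinv, hmadj, hun⟩ := s12_partner hM
    have hmp : m p = q := (hun p q (Subgraph.mem_edgeSet.mp he)).symm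
    have himg : m '' S ⊆ (s12nhd H S) \ {p} := by
      rintro _ ⟨x, hx, rfl⟩
      refine ⟨⟨x, hx, (M.adj_sub (hmadj x)).symm⟩, ?_⟩
      intro hmem
      have : x = q := by
        have : m (m x) = m p := by rw [Set.mem_singleton_iff.mp hmem]
        rwa [hinv x, hmp] at this
      exact hqS (this ▸ hx)
    have e1 : S.ncard = (m '' S).ncard := (Set.ncard_image_of_injOn (hinv.injective.injOn)).symm
    have e2 : (m '' S).ncard ≤ ((s12nhd H S) \ {p}).ncard :=
      Set.ncard_le_ncard himg (Set.toFinite _)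
    have e3 : ((s12nhd H S) \ {p}).ncard = (s12nhd H S).ncard - 1 :=
      Set.ncard_diff_singleton_of_mem hp
    omega
  -- closure
  have step2 : ∀ x y, x ∈ S ∪ s12nhd H S → H.Adj x y → y ∈ S ∪ s12nhd H S := by
    intro x y hx hadjxy
    rcases hx with hx | hx
    · exact Or.inr ⟨x, hx, hadjxy.symm⟩
    · have hxU : x ∈ U := s12nhd_subset_U hbip hS hx
      have hyW : y ∈ W := s12_adj_right hbip hadjxy hxU
      by_cases hyS : y ∈ S
      · exact Or.inl hyS
      · exact absurd hadjxy (step1 x y hx hyW hyS)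
  obtain ⟨s0, hs0⟩ := hne
  have step3 : ∀ v, v ∈ S ∪ s12nhd H S := by
    intro v
    exact (hmc.1.preconnected s0 v).elim fun p => s12_walk_closed step2 p (Or.inl hs0)
  refine Set.Subset.antisymm hS (fun q hq => ?_)
  rcases step3 q with h | h
  · exact h
  · exact absurd hq (s12_notW hbip (s12nhd_subset_U hbip hS h))

lemma s12_hall_plus [Fintype V] (hbip : IsBipartition H U W) (hmc : MatchingCovered H)
    {S : Set V} (hS : S ⊆ W) (hne : S.Nonempty) (hSW : S ≠ W) :
    S.ncard + 1 ≤ (s12nhd H S).ncard := by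
  have h1 := s12_hall_lower hmc S
  rcases Nat.lt_or_ge S.ncard (s12nhd H S).ncard with h | h
  · omega
  · exact absurd (s12_tight_eq_W hbip hmc hS hne h) hSW

/-- conversion: a deficient set in `H − u wi` yields the tight structure in `H`. -/
lemma s12_keyC [Fintype V] (hbip : IsBipartition H U W) (hmc : MatchingCovered H)
    {u wi : V} (hu : u ∈ U) (hwi : wi ∈ W)
    {S : Set V} (hSW : S ⊆ W) (hSne : S.Nonempty) (hSneW : S ≠ W)
    (hcard : (s12nhd (H.deleteEdges {s(u, wi)}) S).ncard ≤ S.ncard) :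
    ∃ T : Set V, T ⊆ W ∧ wi ∈ T ∧ (∀ q ∈ T, H.Adj u q → q = wi) ∧
      (s12nhd H T).ncard = T.ncard + 1 := by
  set G' := H.deleteEdges {s(u, wi)} with hG'
  have hG'adj : ∀ x y : V, G'.Adj x y ↔ H.Adj x y ∧ s(x, y) ≠ s(u, wi) := by
    intro x y
    simp [hG', SimpleGraph.deleteEdges_adj]
  by_cases hwiS : wi ∈ S
  · -- main case
    have hNH : s12nhd H S ⊆ s12nhd G' S ∪ {u} := by
      rintro v ⟨x, hx, hadj⟩
      by_cases he : s(v, x) = s(u, wi)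
      · rcases Sym2.eq_iff.mp he with ⟨rfl, rfl⟩ | ⟨rfl, rfl⟩
        · exact Or.inr rfl
        · exact absurd (hSW hx) (s12_notW hbip hu)
      · exact Or.inl ⟨x, hx, (hG'adj v x).mpr ⟨hadj, he⟩⟩
    have hcard2 : (s12nhd H S).ncard ≤ S.ncard + 1 := by
      have h1 : (s12nhd H S).ncard ≤ (s12nhd G' S ∪ {u}).ncard :=
        Set.ncard_le_ncard hNH (Set.toFinite _)
      have h2 : (s12nhd G' S ∪ {u}).ncard ≤ (s12nhd G' S).ncard + ({u} : Set V).ncard :=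
        Set.ncard_union_le _ _
      have h3 : ({u} : Set V).ncard = 1 := Set.ncard_singleton u
      omega
    have hge := s12_hall_plus hbip hmc hSW hSne hSneW
    have heq : (s12nhd H S).ncard = S.ncard + 1 := le_antisymm hcard2 hge
    have hunotin : u ∉ s12nhd G' S := by
      intro hmem
      have hNH2 : s12nhd H S ⊆ s12nhd G' S := by
        intro v hv
        rcases hNH hv with h | h
        · exact h
        · exact Set.mem_singleton_iff.mp h ▸ hmem
      have := Set.ncard_le_ncard hNH2 (Set.toFinite _)
      omega
    refine ⟨S, hSW, hwiS, ?_, heq⟩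
    intro q hq hadjq
    by_contra hne
    exact hunotin ⟨q, hq, (hG'adj u q).mpr ⟨hadjq, fun h => hne (Sym2.congr_right.mp h)⟩⟩
  · -- wi ∉ S: contradiction
    exfalso
    have hNH : s12nhd H S ⊆ s12nhd G' S := by
      rintro v ⟨x, hx, hadj⟩
      by_cases he : s(v, x) = s(u, wi)
      · rcases Sym2.eq_iff.mp he with ⟨rfl, rfl⟩ | ⟨rfl, rfl⟩
        · exact absurd hx hwiS
        · exact absurd (hSW hx) (s12_notW hbip hu)
      · exact ⟨x, hx, (hG'adj v x).mpr ⟨hadj, he⟩⟩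
    have h1 : (s12nhd H S).ncard ≤ S.ncard :=
      le_trans (Set.ncard_le_ncard hNH (Set.toFinite _)) hcard
    exact hSneW (s12_tight_eq_W hbip hmc hSW hSne h1)

/-- Hall case: `H − u wi` connected but has an edge `ab` in no perfect matching. -/
lemma s12_keyB [Fintype V] [DecidableEq V] (hbip : IsBipartition H U W)
    (hmc : MatchingCovered H) {u wi : V} (hu : u ∈ U) (hwi : wi ∈ W)
    {a b : V} (ha : a ∈ U) (hb : b ∈ W)
    (hab : (H.deleteEdges {s(u, wi)}).Adj a b)
    (hfno : ¬ ∃ M : Subgraph (H.deleteEdges {s(u, wi)}),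
      M.IsPerfectMatching ∧ s(a, b) ∈ M.edgeSet) :
    ∃ S : Set V, S ⊆ W ∧ b ∉ S ∧ S.Nonempty ∧
      (s12nhd (H.deleteEdges {s(u, wi)}) S).ncard ≤ S.ncard := by
  classical
  set G' := H.deleteEdges {s(u, wi)} with hG'
  letI : DecidableRel G'.Adj := fun x y => Classical.dec _
  set t : ↥(W \ {b}) → Finset V := fun q => (G'.neighborFinset q.1).erase a with ht
  by_cases hall : ∀ s : Finset ↥(W \ {b}), s.card ≤ (s.biUnion t).card
  · exfalso
    obtain ⟨f, hfinj, hft⟩ := (Finset.all_card_le_biUnion_card_iff_exists_injective t).mp hall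
    have hfadj : ∀ q : ↥(W \ {b}), G'.Adj q.1 (f q) := by
      intro q
      have := hft q
      rw [ht] at this
      simp only [Finset.mem_erase, SimpleGraph.mem_neighborFinset] at this
      exact this.2
    have hfa : ∀ q : ↥(W \ {b}), f q ≠ a := by
      intro q
      have := hft q
      rw [ht] at this
      simp only [Finset.mem_erase, SimpleGraph.mem_neighborFinset] at this
      exact this.1
    have hfU : ∀ q : ↥(W \ {b}), f q ∈ U := fun q =>
      s12_adj_left hbip (SimpleGraph.deleteEdges_adj.mp (hfadj q)).1.symm q.2.1
    -- range f = U \ {a}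
    have hrange : Set.range f = U \ {a} := by
      have hsub : Set.range f ⊆ U \ {a} := by
        rintro _ ⟨q, rfl⟩
        exact ⟨hfU q, hfa q⟩
      refine Set.eq_of_subset_of_ncard_le hsub ?_ (Set.toFinite _)
      have e1 : (Set.range f).ncard = Nat.card ↥(W \ {b} : Set V) := by
        rw [← Nat.card_coe_set_eq, Nat.card_range_of_injective hfinj]
      have e2 : Nat.card ↥(W \ {b} : Set V) = (W \ {b}).ncard := Nat.card_coe_set_eq _
      have e3 : (W \ {b}).ncard = W.ncard - 1 :=
        Set.ncard_diff_singleton_of_mem hb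
      have e4 : (U \ {a}).ncard = U.ncard - 1 :=
        Set.ncard_diff_singleton_of_mem ha
      have e5 := s12_card_U_eq_W hbip hmc
      omega
    have hsurj : ∀ v ∈ U, v ≠ a → ∃ q : ↥(W \ {b}), f q = v := by
      intro v hv hva
      have : v ∈ Set.range f := hrange ▸ (⟨hv, hva⟩ : v ∈ U \ {a})
      exact this
    have habne : a ≠ b := fun h => s12_notW hbip ha (h ▸ hb)
    -- build perfect matching of G' containing ab
    refine hfno ⟨⟨Set.univ,
      fun x y => (x = a ∧ y = b) ∨ (x = b ∧ y = a) ∨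
        (∃ q : ↥(W \ {b}), q.1 = x ∧ f q = y) ∨ (∃ q : ↥(W \ {b}), q.1 = y ∧ f q = x),
      ?_, fun {v w} _ => Set.mem_univ v, ?_⟩, ⟨?_, fun v => Set.mem_univ v⟩, ?_⟩
    · -- adj_sub
      rintro x y (⟨rfl, rfl⟩ | ⟨rfl, rfl⟩ | ⟨q, rfl, rfl⟩ | ⟨q, rfl, rfl⟩)
      · exact hab
      · exact hab.symm
      · exact hfadj q
      · exact (hfadj q).symm
    · -- symm
      constructor
      rintro x y (⟨rfl, rfl⟩ | ⟨rfl, rfl⟩ | ⟨q, rfl, rfl⟩ | ⟨q, rfl, rfl⟩)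
      · exact Or.inr (Or.inl ⟨rfl, rfl⟩)
      · exact Or.inl ⟨rfl, rfl⟩
      · exact Or.inr (Or.inr (Or.inr ⟨q, rfl, rfl⟩))
      · exact Or.inr (Or.inr (Or.inl ⟨q, rfl, rfl⟩))
    · -- IsMatching
      intro v _
      by_cases hva : v = a
      · subst hva
        refine ⟨b, Or.inl ⟨rfl, rfl⟩, ?_⟩
        rintro y (⟨-, rfl⟩ | ⟨hab', -⟩ | ⟨q, hq1, -⟩ | ⟨q, -, hq2⟩)
        · rfl
        · exact absurd hab' habne
        · exact absurd (hq1 ▸ q.2.1) (s12_notW hbip ha)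
        · exact absurd hq2 (hfa q)
      by_cases hvb : v = b
      · subst hvb
        refine ⟨a, Or.inr (Or.inl ⟨rfl, rfl⟩), ?_⟩
        rintro y (⟨hba, -⟩ | ⟨-, rfl⟩ | ⟨q, hq1, -⟩ | ⟨q, -, hq2⟩)
        · exact absurd hba.symm habne
        · rfl
        · exact absurd hq1 q.2.2
        · exact absurd hb (s12_notW hbip (hq2 ▸ hfU q))
      by_cases hvW : v ∈ W
      · refine ⟨f ⟨v, hvW, hvb⟩, Or.inr (Or.inr (Or.inl ⟨⟨v, hvW, hvb⟩, rfl, rfl⟩)), ?_⟩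
        rintro y (⟨rfl, -⟩ | ⟨rfl, -⟩ | ⟨q, hq1, rfl⟩ | ⟨q, hq1, hq2⟩)
        · exact absurd hvW (s12_notW hbip ha)
        · exact absurd rfl hvb
        · congr 1
          exact Subtype.ext hq1
        · exact absurd hvW (s12_notW hbip (hq2 ▸ hfU q))
      · have hvU : v ∈ U := by
          have := hbip.2.1
          have hv : v ∈ U ∪ W := this ▸ Set.mem_univ v
          rcases hv with h | h
          · exact h
          · exact absurd h hvW
        obtain ⟨q, hq⟩ := hsurj v hvU hva
        refine ⟨q.1, Or.inr (Or.inr (Or.inr ⟨q, rfl, hq⟩)), ?_⟩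
        rintro y (⟨rfl, -⟩ | ⟨rfl, -⟩ | ⟨q', hq1, -⟩ | ⟨q', hq1, hq2⟩)
        · exact absurd rfl hva
        · exact absurd hb hvW
        · exact absurd (hq1 ▸ q'.2.1) hvW
        · rw [← hq1]
          congr 1
          exact hfinj (by rw [hq2, hq])
    · -- edge membership
      exact Subgraph.mem_edgeSet.mpr (Or.inl ⟨rfl, rfl⟩)
  · -- Hall fails: deficient set
    push_neg at hall
    obtain ⟨s, hs⟩ := hall
    refine ⟨(↑(s.image (fun q : ↥(W \ {b}) => q.1)) : Set V), ?_, ?_, ?_, ?_⟩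
    · intro v hv
      simp only [Finset.coe_image, Set.mem_image] at hv
      obtain ⟨q, -, rfl⟩ := hv
      exact q.2.1
    · intro hmem
      simp only [Finset.coe_image, Set.mem_image] at hmem
      obtain ⟨q, -, hq⟩ := hmem
      exact q.2.2 hq
    · have hspos : 0 < s.card := lt_of_le_of_lt (Nat.zero_le _) hs
      obtain ⟨q, hq⟩ := Finset.card_pos.mp hspos
      exact ⟨q.1, by simp only [Finset.coe_image, Set.mem_image]; exact ⟨q, hq, rfl⟩⟩
    · have hN : s12nhd G' (↑(s.image (fun q : ↥(W \ {b}) => q.1)) : Set V) ⊆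
          ↑(s.biUnion t) ∪ {a} := by
        rintro v ⟨x, hx, hadjvx⟩
        simp only [Finset.coe_image, Set.mem_image] at hx
        obtain ⟨q, hqs, rfl⟩ := hx
        by_cases hva : v = a
        · exact Or.inr (by simp [hva])
        · refine Or.inl ?_
          simp only [Finset.coe_biUnion, Set.mem_iUnion]
          exact ⟨q, hqs, Finset.mem_erase.mpr
            ⟨hva, (SimpleGraph.mem_neighborFinset _ _ _).mpr hadjvx.symm⟩⟩
      have h1 := Set.ncard_le_ncard hN (Set.toFinite _)
      have h2 : ((↑(s.biUnion t) : Set V) ∪ {a}).ncard ≤ (s.biUnion t).card + 1 := by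
        have := Set.ncard_union_le (↑(s.biUnion t) : Set V) {a}
        rw [Set.ncard_coe_finset, Set.ncard_singleton] at this
        exact this
      have h3 : (↑(s.image (fun q : ↥(W \ {b}) => q.1)) : Set V).ncard = s.card := by
        rw [Set.ncard_coe_finset, Finset.card_image_of_injective _ Subtype.val_injective]
      omega

/-- existence of the tight set attached to a nonremovable edge at `u`. -/
lemma s12_key [Fintype V] [DecidableEq V] (hbip : IsBipartition H U W)
    (hmc : MatchingCovered H) {u wi : V} (hu : u ∈ U) (hwi : wi ∈ W)
    (hadjuwi : H.Adj u wi) [Fintype (H.neighborSet u)] (hd3 : 3 ≤ H.degree u)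
    (hnr : ¬ MatchingCovered (H.deleteEdges {s(u, wi)})) :
    ∃ S : Set V, S ⊆ W ∧ wi ∈ S ∧ (∀ q ∈ S, H.Adj u q → q = wi) ∧
      (s12nhd H S).ncard = S.ncard + 1 := by
  classical
  set G' := H.deleteEdges {s(u, wi)} with hG'
  have hG'adj : ∀ x y : V, G'.Adj x y ↔ H.Adj x y ∧ s(x, y) ≠ s(u, wi) := by
    intro x y
    simp [hG', SimpleGraph.deleteEdges_adj]
  have hG'H : ∀ x y : V, G'.Adj x y → H.Adj x y := fun x y h => ((hG'adj x y).mp h).1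
  -- a second neighbour of u
  have hcard3 : 3 ≤ (H.neighborFinset u).card := by
    rwa [SimpleGraph.card_neighborFinset_eq_degree]
  obtain ⟨w', hw'mem, hw'ne⟩ :=
    Finset.exists_mem_ne (by omega : 1 < (H.neighborFinset u).card) wi
  have hadjuw' : H.Adj u w' := (H.mem_neighborFinset u w').mp hw'mem
  have hG'uw' : G'.Adj u w' := (hG'adj u w').mpr ⟨hadjuw', fun h =>
    hw'ne (Sym2.congr_right.mp h)⟩
  by_cases hconn : G'.Connected
  · -- connected case: Hall argument
    have hMCfail : ¬ (∀ e ∈ G'.edgeSet, ∃ M : Subgraph G', M.IsPerfectMatching ∧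
        e ∈ M.edgeSet) := by
      intro h
      exact hnr ⟨hconn, ⟨s(u, w'), G'.mem_edgeSet.mpr hG'uw'⟩, h⟩
    push_neg at hMCfail
    obtain ⟨f, hfmem, hfno⟩ := hMCfail
    induction f using Sym2.ind with
    | _ a0 b0 =>
    have hadjab : G'.Adj a0 b0 := G'.mem_edgeSet.mp hfmem
    have hfno' : ¬ ∃ M : Subgraph G', M.IsPerfectMatching ∧ s(a0, b0) ∈ M.edgeSet := by
      intro ⟨M, hM, hmem⟩
      exact hfno M hM hmem
    rcases hbip.2.2 a0 b0 (hG'H _ _ hadjab) with ⟨haU, hbW⟩ | ⟨haW, hbU⟩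
    · obtain ⟨S, hSW, hbS, hSne, hcard⟩ := s12_keyB hbip hmc hu hwi haU hbW hadjab hfno'
      exact s12_keyC hbip hmc hu hwi hSW hSne (fun h => hbS (h ▸ hbW)) hcard
    · have hfno'' : ¬ ∃ M : Subgraph G', M.IsPerfectMatching ∧ s(b0, a0) ∈ M.edgeSet := by
        rw [Sym2.eq_swap]
        exact hfno'
      obtain ⟨S, hSW, hbS, hSne, hcard⟩ :=
        s12_keyB hbip hmc hu hwi hbU haW hadjab.symm hfno''
      exact s12_keyC hbip hmc hu hwi hSW hSne (fun h => hbS (h ▸ haW)) hcard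
  · -- disconnected case
    have htransfer : G'.Reachable u wi → ∀ {x y : V}, H.Walk x y → G'.Reachable x y := by
      intro hruwi x y p
      induction p with
      | nil => exact Reachable.refl _
      | @cons x' y' z' h p ih =>
        refine Reachable.trans ?_ ih
        by_cases he : s(x', y') = s(u, wi)
        · rcases Sym2.eq_iff.mp he with ⟨rfl, rfl⟩ | ⟨rfl, rfl⟩
          · exact hruwi
          · exact hruwi.symm
        · exact ((hG'adj x' y').mpr ⟨h, he⟩).reachable
    have hnr' : ¬ G'.Reachable u wi := by
      intro hruwi
      exact hconn (SimpleGraph.Connected.mk (nonempty := ⟨u⟩) (fun x y =>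
        (hmc.1.preconnected x y).elim fun p => htransfer hruwi p))
    set S : Set V := {q | q ∈ W ∧ G'.Reachable wi q} with hSdef
    set R : Set V := {p | p ∈ U ∧ G'.Reachable wi p} with hRdef
    have hwiS : wi ∈ S := ⟨hwi, Reachable.refl wi⟩
    have hnru : u ∉ R := fun hmem => hnr' hmem.2.symm
    obtain ⟨M0, hM0, he0⟩ := hmc.2.2 s(u, w') (H.mem_edgeSet.mpr hadjuw')
    obtain ⟨m0, hinv0, hm0, hun0⟩ := s12_partner hM0
    have hm0u : m0 u = w' := (hun0 u w' (Subgraph.mem_edgeSet.mp he0)).symm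
    have hm0H : ∀ v, H.Adj v (m0 v) := fun v => M0.adj_sub (hm0 v)
    have claim1 : ∀ q ∈ S, m0 q ∈ R := by
      rintro q ⟨hqW, hqr⟩
      have hadjq : H.Adj q (m0 q) := hm0H q
      have hne : s(q, m0 q) ≠ s(u, wi) := by
        intro he
        rcases Sym2.eq_iff.mp he with ⟨h1, h2⟩ | ⟨h1, h2⟩
        · exact s12_notW hbip hu (h1 ▸ hqW)
        · refine hw'ne ?_
          have h3 : m0 u = q := by rw [← h2, hinv0 q]
          rw [hm0u] at h3
          rw [h3]
          exact h1
      have hG : G'.Adj q (m0 q) := (hG'adj _ _).mpr ⟨hadjq, hne⟩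
      exact ⟨s12_adj_left hbip hadjq.symm hqW, hqr.trans hG.reachable⟩
    have claim2 : ∀ p ∈ R, m0 p ∈ S := by
      rintro p ⟨hpU, hpr⟩
      have hpu : p ≠ u := fun h => hnru (h ▸ (⟨hpU, hpr⟩ : p ∈ R))
      have hadjp : H.Adj p (m0 p) := hm0H p
      have hne : s(p, m0 p) ≠ s(u, wi) := by
        intro he
        rcases Sym2.eq_iff.mp he with ⟨h1, h2⟩ | ⟨h1, h2⟩
        · exact hpu h1
        · exact s12_notW hbip hpU (h1 ▸ hwi)
      have hG : G'.Adj p (m0 p) := (hG'adj _ _).mpr ⟨hadjp, hne⟩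
      exact ⟨s12_adj_right hbip hadjp hpU, hpr.trans hG.reachable⟩
    have hcardRS : R.ncard = S.ncard := by
      have h1 : m0 '' S ⊆ R := by rintro _ ⟨q, hq, rfl⟩; exact claim1 q hq
      have h2 : m0 '' R ⊆ S := by rintro _ ⟨p, hp, rfl⟩; exact claim2 p hp
      have e1 : S.ncard = (m0 '' S).ncard :=
        (Set.ncard_image_of_injOn (hinv0.injective.injOn)).symm
      have e2 : R.ncard = (m0 '' R).ncard :=
        (Set.ncard_image_of_injOn (hinv0.injective.injOn)).symm
      have l1 := Set.ncard_le_ncard h1 (Set.toFinite _)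
      have l2 := Set.ncard_le_ncard h2 (Set.toFinite _)
      omega
    have hnhd : s12nhd H S = insert u R := by
      ext v
      constructor
      · rintro ⟨x, ⟨hxW, hxr⟩, hadjvx⟩
        by_cases he : s(v, x) = s(u, wi)
        · rcases Sym2.eq_iff.mp he with ⟨h1, h2⟩ | ⟨h1, h2⟩
          · exact Set.mem_insert_iff.mpr (Or.inl h1)
          · exact absurd (h2 ▸ hxW) (s12_notW hbip hu)
        · have hG : G'.Adj v x := (hG'adj _ _).mpr ⟨hadjvx, he⟩
          have hvU : v ∈ U := s12_adj_left hbip hadjvx hxW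
          exact Set.mem_insert_iff.mpr (Or.inr ⟨hvU, hxr.trans hG.symm.reachable⟩)
      · intro hv
        rcases Set.mem_insert_iff.mp hv with rfl | hvR
        · exact ⟨wi, hwiS, hadjuwi⟩
        · exact ⟨m0 v, claim2 v hvR, (hm0H v)⟩
    refine ⟨S, fun q hq => hq.1, hwiS, ?_, ?_⟩
    · intro q hq hadjq
      by_contra hne
      have hG : G'.Adj u q := (hG'adj _ _).mpr ⟨hadjq, fun h => hne (Sym2.congr_right.mp h)⟩
      exact hnr' (hG.reachable.trans hq.2.symm)
    · rw [hnhd, Set.ncard_insert_of_notMem hnru (Set.toFinite _), hcardRS]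

/-- uncrossing: tight sets of distinct nonremovable edges at `u` intersect only at `u`. -/
lemma s12_uncross [Fintype V] (hbip : IsBipartition H U W) (hmc : MatchingCovered H)
    {u wi wj : V} (hu : u ∈ U) (hwne : wi ≠ wj)
    {S T : Set V} (hSW : S ⊆ W) (hTW : T ⊆ W)
    (hwiS : wi ∈ S) (hwjT : wj ∈ T)
    (hSu : ∀ q ∈ S, H.Adj u q → q = wi) (hTu : ∀ q ∈ T, H.Adj u q → q = wj)
    (hScard : (s12nhd H S).ncard = S.ncard + 1)
    (hTcard : (s12nhd H T).ncard = T.ncard + 1)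
    (hadjwi : H.Adj u wi) (hadjwj : H.Adj u wj)
    {w3 : V} (hadjw3 : H.Adj u w3) (hw3i : w3 ≠ wi) (hw3j : w3 ≠ wj) :
    s12nhd H S ∩ s12nhd H T = {u} ∧ S ∩ T = ∅ := by
  have huS : u ∈ s12nhd H S := ⟨wi, hwiS, hadjwi⟩
  have huT : u ∈ s12nhd H T := ⟨wj, hwjT, hadjwj⟩
  have hw3W : w3 ∈ W := s12_adj_right hbip hadjw3 hu
  have hBW : S ∪ T ≠ W := by
    intro h
    have h3 : w3 ∈ S ∪ T := by rw [h]; exact hw3W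
    rcases h3 with h3 | h3
    · exact hw3i (hSu w3 h3 hadjw3)
    · exact hw3j (hTu w3 h3 hadjw3)
  have hBne : (S ∪ T).Nonempty := ⟨wi, Or.inl hwiS⟩
  have hBsub : S ∪ T ⊆ W := Set.union_subset hSW hTW
  have e3 : (S ∪ T).ncard + 1 ≤ (s12nhd H (S ∪ T)).ncard :=
    s12_hall_plus hbip hmc hBsub hBne hBW
  rw [s12nhd_union] at e3
  have e1 : (s12nhd H S ∪ s12nhd H T).ncard + (s12nhd H S ∩ s12nhd H T).ncard =
      (s12nhd H S).ncard + (s12nhd H T).ncard :=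
    Set.ncard_union_add_ncard_inter _ _ (Set.toFinite _) (Set.toFinite _)
  have e2 : (S ∪ T).ncard + (S ∩ T).ncard = S.ncard + T.ncard :=
    Set.ncard_union_add_ncard_inter _ _ (Set.toFinite _) (Set.toFinite _)
  have hAu : u ∉ s12nhd H (S ∩ T) := by
    rintro ⟨x, ⟨hxS, hxT⟩, hadjux⟩
    exact hwne ((hSu x hxS hadjux) ▸ (hTu x hxT hadjux) ▸ rfl)
  have hint : s12nhd H S ∩ s12nhd H T = {u} := by
    refine Set.Subset.antisymm ?_ (Set.singleton_subset_iff.mpr ⟨huS, huT⟩)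
    intro p hp
    by_contra hpu
    have hk2 : 2 ≤ (s12nhd H S ∩ s12nhd H T).ncard := by
      have hsub : ({u, p} : Set V) ⊆ s12nhd H S ∩ s12nhd H T := by
        rintro x (rfl | rfl)
        · exact ⟨huS, huT⟩
        · exact hp
      calc 2 = ({u, p} : Set V).ncard :=
          (Set.ncard_pair (fun h : u = p => hpu (Set.mem_singleton_iff.mpr h.symm))).symm
        _ ≤ _ := Set.ncard_le_ncard hsub (Set.toFinite _)
    -- k ≤ |S∩T| + 1, so S∩T nonempty
    have hSTpos : 0 < (S ∩ T).ncard := by omega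
    have hSTne : (S ∩ T).Nonempty := (Set.ncard_pos (Set.toFinite _)).mp hSTpos
    have hmono : s12nhd H (S ∩ T) ⊆ (s12nhd H S ∩ s12nhd H T) \ {u} := by
      intro v hv
      refine ⟨⟨s12nhd_mono Set.inter_subset_left hv,
        s12nhd_mono Set.inter_subset_right hv⟩, ?_⟩
      intro h
      rw [Set.mem_singleton_iff] at h
      subst h
      exact hAu hv
    have h4 : (s12nhd H (S ∩ T)).ncard ≤ (s12nhd H S ∩ s12nhd H T).ncard - 1 := by
      have := Set.ncard_le_ncard hmono (Set.toFinite _)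
      have hd : ((s12nhd H S ∩ s12nhd H T) \ {u}).ncard =
          (s12nhd H S ∩ s12nhd H T).ncard - 1 :=
        Set.ncard_diff_singleton_of_mem (⟨huS, huT⟩ : u ∈ s12nhd H S ∩ s12nhd H T)
      omega
    have h5 : (s12nhd H (S ∩ T)).ncard ≤ (S ∩ T).ncard := by omega
    have h6 : S ∩ T = W :=
      s12_tight_eq_W hbip hmc (fun x hx => hSW hx.1) hSTne h5
    refine hAu ?_
    rw [h6]
    exact ⟨wi, hSW hwiS, hadjwi⟩
  refine ⟨hint, ?_⟩
  obtain ⟨m, hminv, hmadj⟩ := s12_global_partner hmc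
  refine Set.eq_empty_iff_forall_notMem.mpr fun q hq => ?_
  have hmq : m q ∈ s12nhd H S ∩ s12nhd H T :=
    ⟨⟨q, hq.1, (hmadj q).symm⟩, ⟨q, hq.2, (hmadj q).symm⟩⟩
  have hmqu : m q = u := Set.mem_singleton_iff.mp (hint ▸ hmq)
  have hadjuq : H.Adj u q := hmqu ▸ (hmadj q).symm
  exact hwne ((hSu q hq.1 hadjuq) ▸ (hTu q hq.2 hadjuq) ▸ rfl)

end bip

/-- assembling a family of disjoint subsets into a partition indexed by `Fin (r+1)`. -/
lemma s12_assemble {r : ℕ} (X : Set V) (F : Fin r → Set V)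
    (hsub : ∀ i, F i ⊆ X) (hdisj : ∀ i j, i ≠ j → F i ∩ F j = ∅) :
    Set.univ.PairwiseDisjoint (Fin.cases (X \ ⋃ j, F j) F : Fin (r+1) → Set V) ∧
    (⋃ i, (Fin.cases (X \ ⋃ j, F j) F : Fin (r+1) → Set V) i) = X := by
  constructor
  · intro x _ y _ hxy
    show Disjoint _ _
    rcases Fin.eq_zero_or_eq_succ x with rfl | ⟨i, rfl⟩ <;>
      rcases Fin.eq_zero_or_eq_succ y with rfl | ⟨j, rfl⟩
    · exact absurd rfl hxy
    · simp only [Fin.cases_zero, Fin.cases_succ]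
      refine Set.disjoint_left.mpr fun a ha haj => ?_
      exact ha.2 (Set.mem_iUnion.mpr ⟨j, haj⟩)
    · simp only [Fin.cases_zero, Fin.cases_succ]
      refine Set.disjoint_left.mpr fun a hai ha => ?_
      exact ha.2 (Set.mem_iUnion.mpr ⟨i, hai⟩)
    · simp only [Fin.cases_succ]
      have hij : i ≠ j := fun h => hxy (h ▸ rfl)
      refine Set.disjoint_left.mpr fun a hai haj => ?_
      have h := hdisj i j hij
      have : a ∈ F i ∩ F j := ⟨hai, haj⟩
      rw [h] at this
      exact Set.notMem_empty a this
  · apply Set.Subset.antisymm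
    · refine Set.iUnion_subset fun i => ?_
      rcases Fin.eq_zero_or_eq_succ i with rfl | ⟨j, rfl⟩
      · simp only [Fin.cases_zero]
        exact Set.diff_subset
      · simp only [Fin.cases_succ]
        exact hsub j
    · intro v hv
      by_cases hmem : v ∈ ⋃ j, F j
      · obtain ⟨j, hj⟩ := Set.mem_iUnion.mp hmem
        exact Set.mem_iUnion.mpr ⟨j.succ, by simpa using hj⟩
      · exact Set.mem_iUnion.mpr ⟨0, ⟨hv, hmem⟩⟩

/-- structure of the nonremovable edges at a vertex of a
bipartite matching covered graph. -/
theorem stmt12 [Fintype V] [DecidableEq V] (H : SimpleGraph V)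
    [DecidableRel H.Adj] (U W : Set V)
    (hbip : IsBipartition H U W) (hmc : MatchingCovered H)
    (u : V) (hu : u ∈ U) (d : ℕ) (hd : H.degree u = d) (hd3 : 3 ≤ d)
    (r : ℕ) (hr0 : 0 < r) (hrd : r ≤ d)
    (w : Fin r → V) (hwW : ∀ i, w i ∈ W) (hwinj : Function.Injective w)
    (hadj : ∀ i, H.Adj u (w i))
    (hnonrem : ∀ i, ¬ Removable H s(u, w i)) :
    ∃ Us Ws : Fin (r + 1) → Set V,
      Set.univ.PairwiseDisjoint Us ∧ (⋃ i, Us i) = U ∧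
      Set.univ.PairwiseDisjoint Ws ∧ (⋃ i, Ws i) = W ∧
      u ∈ Us 0 ∧
      ∀ i : Fin r,
        (Us i.succ).ncard = (Ws i.succ).ncard ∧
        w i ∈ Ws i.succ ∧
        {v : V | ∃ x ∈ Ws i.succ, H.Adj v x} = Us i.succ ∪ {u} ∧
        (∀ p ∈ Us 0, ∀ q ∈ Ws i.succ, H.Adj p q → p = u ∧ q = w i) := by
  classical
  have hd3' : 3 ≤ H.degree u := hd ▸ hd3
  have hthird : ∀ i j : Fin r, ∃ w3, H.Adj u w3 ∧ w3 ≠ w i ∧ w3 ≠ w j := by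
    intro i j
    have hcard3 : 3 ≤ (H.neighborFinset u).card := by
      rwa [SimpleGraph.card_neighborFinset_eq_degree]
    have hwmem : w i ∈ H.neighborFinset u := (H.mem_neighborFinset u _).mpr (hadj i)
    have h1 : 1 < ((H.neighborFinset u).erase (w i)).card := by
      rw [Finset.card_erase_of_mem hwmem]; omega
    obtain ⟨w3, h3mem, h3j⟩ := Finset.exists_mem_ne h1 (w j)
    obtain ⟨h3i, h3mem'⟩ := Finset.mem_erase.mp h3mem
    exact ⟨w3, (H.mem_neighborFinset u _).mp h3mem', h3i, h3j⟩
  have key : ∀ i : Fin r, ∃ S : Set V, S ⊆ W ∧ w i ∈ S ∧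
      (∀ q ∈ S, H.Adj u q → q = w i) ∧ (s12nhd H S).ncard = S.ncard + 1 := by
    intro i
    refine s12_key hbip hmc hu (hwW i) (hadj i) hd3' ?_
    intro hmcdel
    exact hnonrem i ⟨H.mem_edgeSet.mpr (hadj i), hmcdel⟩
  choose S hSW hwS hSu hScard using key
  have huN : ∀ i, u ∈ s12nhd H (S i) := fun i => ⟨w i, hwS i, hadj i⟩
  have huncross : ∀ i j : Fin r, i ≠ j →
      s12nhd H (S i) ∩ s12nhd H (S j) = {u} ∧ S i ∩ S j = ∅ := by
    intro i j hij
    obtain ⟨w3, ha3, h3i, h3j⟩ := hthird i j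
    exact s12_uncross hbip hmc hu (hwinj.ne hij) (hSW i) (hSW j) (hwS i) (hwS j)
      (hSu i) (hSu j) (hScard i) (hScard j) (hadj i) (hadj j) ha3 h3i h3j
  set Uf : Fin r → Set V := fun i => s12nhd H (S i) \ {u} with hUf
  have hUfU : ∀ i, Uf i ⊆ U := fun i v hv => s12nhd_subset_U hbip (hSW i) hv.1
  have hUfdisj : ∀ i j, i ≠ j → Uf i ∩ Uf j = ∅ := by
    intro i j hij
    refine Set.eq_empty_iff_forall_notMem.mpr fun a ⟨hai, haj⟩ => ?_
    have h := (huncross i j hij).1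
    have hmem : a ∈ s12nhd H (S i) ∩ s12nhd H (S j) := ⟨hai.1, haj.1⟩
    rw [h] at hmem
    exact hai.2 hmem
  have hSdisj : ∀ i j, i ≠ j → S i ∩ S j = ∅ := fun i j hij => (huncross i j hij).2
  obtain ⟨hUpd, hUun⟩ := s12_assemble U Uf hUfU hUfdisj
  obtain ⟨hWpd, hWun⟩ := s12_assemble W S hSW hSdisj
  refine ⟨Fin.cases (U \ ⋃ j, Uf j) Uf, Fin.cases (W \ ⋃ j, S j) S,
    hUpd, hUun, hWpd, hWun, ?_, ?_⟩
  · show u ∈ U \ ⋃ j, Uf j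
    refine ⟨hu, fun hmem => ?_⟩
    obtain ⟨j, hj⟩ := Set.mem_iUnion.mp hmem
    exact hj.2 rfl
  · intro i
    refine ⟨?_, ?_, ?_, ?_⟩
    · show (Uf i).ncard = (S i).ncard
      have h1 : (Uf i).ncard = (s12nhd H (S i)).ncard - 1 :=
        Set.ncard_diff_singleton_of_mem (huN i)
      have h2 := hScard i
      omega
    · show w i ∈ S i
      exact hwS i
    · show s12nhd H (S i) = Uf i ∪ {u}
      rw [hUf]
      rw [Set.diff_union_self]
      rw [Set.union_eq_self_of_subset_right (Set.singleton_subset_iff.mpr (huN i))]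
    · intro p hp q hq hadjpq
      simp only [Fin.cases_zero] at hp
      simp only [Fin.cases_succ] at hq
      have hpN : p ∈ s12nhd H (S i) := ⟨q, hq, hadjpq⟩
      have hpu : p = u := by
        by_contra hne
        exact hp.2 (Set.mem_iUnion.mpr ⟨i,
          ⟨hpN, fun h => hne (Set.mem_singleton_iff.mp h)⟩⟩)
      exact ⟨hpu, hSu i q hq (hpu ▸ hadjpq)⟩
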